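/- arXiv:1409.6159 — 3 statements merged into one kernel-verified Lean document; each statement's English description precedes it below -/
import Mathlib

section
/- The Rédei rational functions satisfy the multiplicative property Q_{mn}(d,z) = Q_m(d, Q_n(d,z)) whenever all quantities are defined, where Q_n(d,z) = N_n(d,z)/D_n(d,z). In particular, Q_2(d, Q_n(d,z)) = Q_{2n}(d,z). -/
/-- Rédei polynomial `N_n(d,x)` as a rational number. -/
def redeiN (d x : ℚ) (n : ℕ) : ℚ :=
  ∑ i ∈ Finset.range (n / 2 + 1), (n.choose (2 * i) : ℚ) * d ^ i * x ^ (n - 2 * i)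

/-- Rédei polynomial `D_n(d,x)` as a rational number. -/
def redeiD (d x : ℚ) (n : ℕ) : ℚ :=
  ∑ i ∈ Finset.range (n / 2 + 1), (n.choose (2 * i + 1) : ℚ) * d ^ i * x ^ (n - 2 * i - 1)

/-- Rédei rational function `Q_n(d,x)`. -/
def redeiQ (d x : ℚ) (n : ℕ) : ℚ := redeiN d x n / redeiD d x n

/-- Real version of the Rédei numerator. -/
noncomputable def redeiNR (d x : ℝ) (n : ℕ) : ℝ :=
  ∑ i ∈ Finset.range (n / 2 + 1), (n.choose (2 * i) : ℝ) * d ^ i * x ^ (n - 2 * i)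

/-- Real version of the Rédei denominator. -/
noncomputable def redeiDR (d x : ℝ) (n : ℕ) : ℝ :=
  ∑ i ∈ Finset.range (n / 2 + 1), (n.choose (2 * i + 1) : ℝ) * d ^ i * x ^ (n - 2 * i - 1)

lemma redeiN_cast (d x : ℚ) (n : ℕ) : ((redeiN d x n : ℚ) : ℝ) = redeiNR (d : ℝ) (x : ℝ) n := by
  unfold redeiN redeiNR; push_cast; ring

lemma redeiD_cast (d x : ℚ) (n : ℕ) : ((redeiD d x n : ℚ) : ℝ) = redeiDR (d : ℝ) (x : ℝ) n := by
  unfold redeiD redeiDR; push_cast; ring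

lemma sum_pair {M : Type*} [AddCommMonoid M] (f : ℕ → M) (m : ℕ) :
    ∑ k ∈ Finset.range (2 * m), f k = ∑ i ∈ Finset.range m, (f (2 * i) + f (2 * i + 1)) := by
  induction m with
  | zero => simp
  | succ m ih =>
    have h : 2 * (m + 1) = (2 * m + 1) + 1 := by ring
    rw [Finset.sum_range_succ, ← ih, h, Finset.sum_range_succ, Finset.sum_range_succ, add_assoc]

lemma redei_key (t x : ℝ) (n : ℕ) :
    (x + t) ^ n = redeiNR (t ^ 2) x n + t * redeiDR (t ^ 2) x n := by
  rw [add_comm, add_pow]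
  have hsub : Finset.range (n + 1) ⊆ Finset.range (2 * (n / 2 + 1)) := by
    apply Finset.range_subset_range.2; omega
  rw [show (∑ k ∈ Finset.range (n + 1), t ^ k * x ^ (n - k) * (n.choose k : ℝ))
      = ∑ k ∈ Finset.range (2 * (n / 2 + 1)), t ^ k * x ^ (n - k) * (n.choose k : ℝ) from
    Finset.sum_subset hsub (by
      intro k hk hk'
      simp only [Finset.mem_range] at hk hk'
      have : n < k := by omega
      simp [Nat.choose_eq_zero_of_lt this])]
  rw [sum_pair (fun k => t ^ k * x ^ (n - k) * (n.choose k : ℝ))]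
  rw [Finset.sum_add_distrib]
  unfold redeiNR redeiDR
  rw [Finset.mul_sum]
  congr 1
  · apply Finset.sum_congr rfl
    intro i _
    rw [pow_mul]
    ring
  · apply Finset.sum_congr rfl
    intro i _
    have : n - 2 * i - 1 = n - (2 * i + 1) := by omega
    rw [this, pow_succ, pow_mul]
    ring

lemma uniq {s : ℝ} (hirr : Irrational s) {a b a' b' : ℚ}
    (h : (a : ℝ) + b * s = a' + b' * s) : a = a' ∧ b = b' := by
  have hb : b = b' := by
    by_contra hbb
    apply hirr
    refine ⟨(a - a') / (b' - b), ?_⟩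
    have hne : ((b' : ℝ) - b) ≠ 0 := by
      intro h0
      have h1 : (b' : ℝ) = b := sub_eq_zero.1 h0
      have h2 : b' = b := by exact_mod_cast h1
      exact hbb h2.symm
    push_cast
    field_simp
    linarith
  refine ⟨?_, hb⟩
  have : (a : ℝ) = a' := by rw [hb] at h; linarith
  exact_mod_cast this

lemma redei_step (d z : ℤ) (hd : 0 < d) (hsq : ¬ IsSquare d) (m n : ℕ)
    (hDn : redeiD (d : ℚ) (z : ℚ) n ≠ 0)
    (hDm : redeiD (d : ℚ) (redeiQ (d : ℚ) (z : ℚ) n) m ≠ 0) :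
    redeiQ (d : ℚ) (z : ℚ) (m * n) = redeiQ (d : ℚ) (redeiQ (d : ℚ) (z : ℚ) n) m := by
  set q : ℚ := redeiQ (d : ℚ) (z : ℚ) n with hq
  set s : ℝ := Real.sqrt (d : ℝ) with hs
  have hirr : Irrational s := by
    rw [hs, show ((d : ℝ)) = ((d : ℤ) : ℝ) by push_cast; ring]
    exact (irrational_sqrt_intCast_iff_of_nonneg hd.le).2 hsq
  have hs2 : s ^ 2 = ((d : ℚ) : ℝ) := by
    rw [hs, sq, Real.mul_self_sqrt (by positivity)]
    push_cast; ring
  -- key expansions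
  have key : ∀ (x : ℚ) (k : ℕ),
      ((x : ℝ) + s) ^ k = ((redeiN (d : ℚ) x k : ℚ) : ℝ) + ((redeiD (d : ℚ) x k : ℚ) : ℝ) * s := by
    intro x k
    rw [redeiN_cast, redeiD_cast, ← hs2, redei_key, mul_comm]
  have hqN : (q : ℚ) * redeiD (d : ℚ) (z : ℚ) n = redeiN (d : ℚ) (z : ℚ) n := by
    rw [hq, redeiQ, div_mul_cancel₀ _ hDn]
  have expand : (((z : ℚ) : ℝ) + s) ^ (m * n)
      = ((redeiD (d : ℚ) (z : ℚ) n ^ m * redeiN (d : ℚ) q m : ℚ) : ℝ)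
        + ((redeiD (d : ℚ) (z : ℚ) n ^ m * redeiD (d : ℚ) q m : ℚ) : ℝ) * s := by
    rw [show m * n = n * m from Nat.mul_comm m n, pow_mul, key (z : ℚ) n]
    have : ((redeiN (d : ℚ) (z : ℚ) n : ℚ) : ℝ) + ((redeiD (d : ℚ) (z : ℚ) n : ℚ) : ℝ) * s
        = ((redeiD (d : ℚ) (z : ℚ) n : ℚ) : ℝ) * (((q : ℚ) : ℝ) + s) := by
      rw [← hqN]; push_cast; ring
    rw [this, mul_pow, key q m]
    push_cast; ring
  have expand2 : (((z : ℚ) : ℝ) + s) ^ (m * n)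
      = ((redeiN (d : ℚ) (z : ℚ) (m * n) : ℚ) : ℝ)
        + ((redeiD (d : ℚ) (z : ℚ) (m * n) : ℚ) : ℝ) * s := key (z : ℚ) (m * n)
  have h := uniq hirr (expand2.symm.trans expand)
  rw [redeiQ, h.1, h.2, redeiQ]
  rw [mul_div_mul_left _ _ (pow_ne_zero m hDn)]

theorem redei_multiplicative (d : ℤ) (z : ℤ) (hd : 0 < d) (hsq : ¬ IsSquare d) (m n : ℕ)
    (hDn : redeiD (d : ℚ) (z : ℚ) n ≠ 0)
    (hDm : redeiD (d : ℚ) (redeiQ (d : ℚ) (z : ℚ) n) m ≠ 0)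
    (hD2 : redeiD (d : ℚ) (redeiQ (d : ℚ) (z : ℚ) n) 2 ≠ 0) :
    redeiQ (d : ℚ) (z : ℚ) (m * n) = redeiQ (d : ℚ) (redeiQ (d : ℚ) (z : ℚ) n) m ∧
    redeiQ (d : ℚ) (redeiQ (d : ℚ) (z : ℚ) n) 2 = redeiQ (d : ℚ) (z : ℚ) (2 * n) := by
  exact ⟨redei_step d z hd hsq m n hDn hDm, (redei_step d z hd hsq 2 n hDn hD2).symm⟩
end

section
/- Let d be a positive nonsquare integer and z a positive integer. Define the Newton sequence x_0 = z, x_n = (x_{n-1}² + d)/(2x_{n-1}) in the rationals. Then x_n = Q_{2^n}(d,z) = N_{2^n}(d,z)/D_{2^n}(d,z) for all n ≥ 0. -/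
lemma redeiD_eq (d z : ℚ) (n : ℕ) : redeiD d z n = ∑ i ∈ Finset.range ((n + 1) / 2),
    (n.choose (2 * i + 1) : ℚ) * d ^ i * z ^ (n - 2 * i - 1) := by
  rw [redeiD]
  refine (Finset.sum_subset ?_ ?_).symm
  · intro i hi; simp only [Finset.mem_range] at *; omega
  · intro i hi hni
    simp only [Finset.mem_range] at hi hni
    have h : n < 2 * i + 1 := by omega
    rw [Nat.choose_eq_zero_of_lt h]; simp

lemma redeiPow (d z : ℚ) (t : ℝ) (ht : t ^ 2 = (d : ℝ)) (n : ℕ) :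
    ((z : ℝ) + t) ^ n = (redeiN d z n : ℝ) + (redeiD d z n : ℝ) * t := by
  have hD : (redeiD d z n : ℝ) * t = ∑ i ∈ Finset.range ((n + 1) / 2),
      (n.choose (2 * i + 1) : ℝ) * (d : ℝ) ^ i * (z : ℝ) ^ (n - 2 * i - 1) * t := by
    rw [redeiD_eq]; push_cast; rw [Finset.sum_mul]
  have hN : (redeiN d z n : ℝ) = ∑ i ∈ Finset.range (n / 2 + 1),
      (n.choose (2 * i) : ℝ) * (d : ℝ) ^ i * (z : ℝ) ^ (n - 2 * i) := by
    rw [redeiN]; push_cast; rfl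
  rw [add_comm, add_pow, hN, hD,
    ← Finset.sum_filter_add_sum_filter_not (Finset.range (n + 1)) (fun k => Even k)]
  congr 1
  · refine Finset.sum_nbij' (fun k => k / 2) (fun i => 2 * i) ?_ ?_ ?_ ?_ ?_
    · intro k hk
      simp only [Finset.mem_filter, Finset.mem_range, Nat.even_iff] at hk ⊢
      omega
    · intro i hi
      simp only [Finset.mem_filter, Finset.mem_range, Nat.even_iff] at hi ⊢
      omega
    · intro k hk
      simp only [Finset.mem_filter, Finset.mem_range, Nat.even_iff] at hk
      omega
    · intro i _; omega
    · intro k hk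
      simp only [Finset.mem_filter, Finset.mem_range, Nat.even_iff] at hk
      obtain ⟨j, rfl⟩ : ∃ j, k = 2 * j := ⟨k / 2, by omega⟩
      have h2 : (2 * j) / 2 = j := by omega
      rw [h2, pow_mul, ht]; ring
  · refine Finset.sum_nbij' (fun k => k / 2) (fun i => 2 * i + 1) ?_ ?_ ?_ ?_ ?_
    · intro k hk
      simp only [Finset.mem_filter, Finset.mem_range, Nat.even_iff] at hk ⊢
      omega
    · intro i hi
      simp only [Finset.mem_filter, Finset.mem_range, Nat.even_iff] at hi ⊢
      omega
    · intro k hk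
      simp only [Finset.mem_filter, Finset.mem_range, Nat.even_iff] at hk
      omega
    · intro i _; omega
    · intro k hk
      simp only [Finset.mem_filter, Finset.mem_range, Nat.even_iff] at hk
      obtain ⟨j, rfl⟩ : ∃ j, k = 2 * j + 1 := ⟨k / 2, by omega⟩
      have h2 : (2 * j + 1) / 2 = j := by omega
      have h3 : n - (2 * j + 1) = n - 2 * j - 1 := by omega
      rw [h2, h3, pow_succ, pow_mul, ht]; ring

lemma redei_double (d z : ℚ) (hd : 0 < d) (m : ℕ) :
    redeiN d z (2 * m) = redeiN d z m ^ 2 + d * redeiD d z m ^ 2 ∧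
    redeiD d z (2 * m) = 2 * redeiN d z m * redeiD d z m := by
  have hd' : (0 : ℝ) < (d : ℝ) := by exact_mod_cast hd
  set s := Real.sqrt (d : ℝ) with hs
  have hs2 : s ^ 2 = (d : ℝ) := Real.sq_sqrt hd'.le
  have hspos : 0 < s := Real.sqrt_pos.mpr hd'
  have hs2' : (-s) ^ 2 = (d : ℝ) := by rw [neg_pow]; simpa using hs2
  have h1 := redeiPow d z s hs2
  have h2 := redeiPow d z (-s) hs2'
  set N := redeiN d z m
  set D := redeiD d z m
  have e1 : (redeiN d z (2 * m) : ℝ) + (redeiD d z (2 * m) : ℝ) * s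
      = ((N : ℝ) ^ 2 + (d : ℝ) * (D : ℝ) ^ 2) + (2 * (N : ℝ) * (D : ℝ)) * s := by
    rw [← h1 (2 * m), mul_comm 2 m, pow_mul, h1 m, ← hs2]; ring
  have e2 : (redeiN d z (2 * m) : ℝ) + (redeiD d z (2 * m) : ℝ) * (-s)
      = ((N : ℝ) ^ 2 + (d : ℝ) * (D : ℝ) ^ 2) + (2 * (N : ℝ) * (D : ℝ)) * (-s) := by
    rw [← h2 (2 * m), mul_comm 2 m, pow_mul, h2 m, ← hs2]; ring
  have eN : (redeiN d z (2 * m) : ℝ) = (N : ℝ) ^ 2 + (d : ℝ) * (D : ℝ) ^ 2 := by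
    nlinarith [e1, e2]
  have eD : (redeiD d z (2 * m) : ℝ) = 2 * (N : ℝ) * (D : ℝ) := by
    have h : (redeiD d z (2 * m) : ℝ) * s = (2 * (N : ℝ) * (D : ℝ)) * s := by linarith
    exact mul_right_cancel₀ hspos.ne' h
  constructor
  · exact_mod_cast eN
  · exact_mod_cast eD

lemma redeiN_pos (d z : ℚ) (hd : 0 < d) (hz : 0 < z) (n : ℕ) : 0 < redeiN d z n := by
  rw [redeiN]
  apply Finset.sum_pos'
  · intro i _; positivity
  · refine ⟨0, Finset.mem_range.mpr (by omega), ?_⟩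
    simp only [mul_zero, Nat.choose_zero_right, Nat.cast_one, pow_zero, mul_one, one_mul,
      Nat.sub_zero]
    exact pow_pos hz _

lemma redeiD_pos (d z : ℚ) (hd : 0 < d) (hz : 0 < z) (n : ℕ) (hn : 0 < n) :
    0 < redeiD d z n := by
  rw [redeiD]
  apply Finset.sum_pos'
  · intro i _; positivity
  · refine ⟨0, Finset.mem_range.mpr (by omega), ?_⟩
    simp only [mul_zero, zero_add, Nat.choose_one_right, pow_zero, mul_one, Nat.sub_zero]
    have hn' : (0 : ℚ) < (n : ℚ) := by exact_mod_cast hn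
    exact mul_pos hn' (pow_pos hz _)

theorem redei_newton (d : ℤ) (z : ℤ) (hd : 0 < d) (hsq : ¬ IsSquare d) (hz : 0 < z)
    (x : ℕ → ℚ) (hx0 : x 0 = z)
    (hxrec : ∀ n : ℕ, x (n + 1) = (x n ^ 2 + d) / (2 * x n)) :
    ∀ n : ℕ, x n = redeiN (d : ℚ) (z : ℚ) (2 ^ n) / redeiD (d : ℚ) (z : ℚ) (2 ^ n) := by
  have hd' : (0 : ℚ) < (d : ℚ) := by exact_mod_cast hd
  have hz' : (0 : ℚ) < (z : ℚ) := by exact_mod_cast hz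
  intro n
  induction n with
  | zero =>
    simp only [pow_zero, hx0]
    rw [redeiN, redeiD]
    norm_num
  | succ n ih =>
    rw [hxrec, ih]
    have h2 : (2 : ℕ) ^ (n + 1) = 2 * 2 ^ n := by ring
    obtain ⟨eN, eD⟩ := redei_double (d : ℚ) (z : ℚ) hd' (2 ^ n)
    rw [h2, eN, eD]
    set N := redeiN (d : ℚ) (z : ℚ) (2 ^ n)
    set D := redeiD (d : ℚ) (z : ℚ) (2 ^ n)
    have hN : 0 < N := redeiN_pos _ _ hd' hz' _
    have hD : 0 < D := redeiD_pos _ _ hd' hz' _ (by positivity)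
    field_simp
end

section
/- Let d be a positive nonsquare integer and z a positive integer with z² < d (or more generally d - z² ≠ 0 and the continued fraction converges). The convergents of the continued fraction [z; 2z/(d-z²), 2z, 2z/(d-z²), 2z, ...] (periodic with period the pair 2z/(d-z²), 2z) are exactly the Rédei rational functions Q_n(d,z) for n ≥ 1, and the continued fraction converges to √d. -/
lemma keyN (d z : ℚ) (s : ℝ) (hs : s ^ 2 = (d : ℝ)) (n : ℕ) :
    ((redeiN d z n : ℚ) : ℝ) = (((z : ℝ) + s) ^ n + ((z : ℝ) - s) ^ n) / 2 := by
  have hA : ((z:ℝ) + s) ^ n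
      = ∑ k ∈ Finset.range (n+1), s ^ k * (z:ℝ) ^ (n - k) * (n.choose k : ℝ) := by
    rw [add_comm]; exact add_pow s _ n
  have hB : ((z:ℝ) - s) ^ n
      = ∑ k ∈ Finset.range (n+1), (-s) ^ k * (z:ℝ) ^ (n - k) * (n.choose k : ℝ) := by
    rw [sub_eq_add_neg, add_comm]; exact add_pow (-s) _ n
  have himg : (Finset.range (n+1)).filter (fun k => Even k)
      = (Finset.range (n/2+1)).image (fun i => 2*i) := by
    ext k
    simp only [Finset.mem_filter, Finset.mem_range, Finset.mem_image, Nat.even_iff]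
    constructor
    · rintro ⟨h1, h2⟩; exact ⟨k/2, by omega, by omega⟩
    · rintro ⟨i, hi, rfl⟩; omega
  rw [hA, hB, ← Finset.sum_add_distrib,
    ← Finset.sum_filter_add_sum_filter_not (Finset.range (n+1)) (fun k => Even k)]
  have hodd : ∑ k ∈ (Finset.range (n+1)).filter (fun k => ¬ Even k),
      (s ^ k * (z:ℝ) ^ (n - k) * (n.choose k : ℝ)
        + (-s) ^ k * (z:ℝ) ^ (n - k) * (n.choose k : ℝ)) = 0 := by
    apply Finset.sum_eq_zero
    intro k hk
    have hk' : Odd k := Nat.not_even_iff_odd.mp (Finset.mem_filter.mp hk).2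
    rw [hk'.neg_pow]; ring
  rw [hodd, add_zero, himg, Finset.sum_image (by intro a _ b _ h; simp only at h; omega)]
  rw [redeiN]
  push_cast
  rw [Finset.sum_div]
  apply Finset.sum_congr rfl
  intro i _
  have : (-s) ^ (2*i) = s ^ (2*i) := (even_two_mul i).neg_pow s
  rw [this, pow_mul, hs]
  ring

lemma keyD (d z : ℚ) (s : ℝ) (hs : s ^ 2 = (d : ℝ)) (hs0 : s ≠ 0) (n : ℕ) :
    ((redeiD d z n : ℚ) : ℝ) = (((z : ℝ) + s) ^ n - ((z : ℝ) - s) ^ n) / (2 * s) := by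
  have hA : ((z:ℝ) + s) ^ n
      = ∑ k ∈ Finset.range (n+2), s ^ k * (z:ℝ) ^ (n - k) * (n.choose k : ℝ) := by
    rw [Finset.sum_range_succ, Nat.choose_succ_self]
    push_cast
    rw [mul_zero, add_zero, add_comm]; exact add_pow s _ n
  have hB : ((z:ℝ) - s) ^ n
      = ∑ k ∈ Finset.range (n+2), (-s) ^ k * (z:ℝ) ^ (n - k) * (n.choose k : ℝ) := by
    rw [Finset.sum_range_succ, Nat.choose_succ_self]
    push_cast
    rw [mul_zero, add_zero, sub_eq_add_neg, add_comm]; exact add_pow (-s) _ n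
  have himg : (Finset.range (n+2)).filter (fun k => ¬ Even k)
      = (Finset.range (n/2+1)).image (fun i => 2*i+1) := by
    ext k
    simp only [Finset.mem_filter, Finset.mem_range, Finset.mem_image, Nat.even_iff]
    constructor
    · rintro ⟨h1, h2⟩; exact ⟨k/2, by omega, by omega⟩
    · rintro ⟨i, hi, rfl⟩; omega
  have step : ((z:ℝ) + s) ^ n - ((z:ℝ) - s) ^ n
      = ∑ k ∈ Finset.range (n+2), (s ^ k * (z:ℝ) ^ (n - k) * (n.choose k : ℝ)
        - (-s) ^ k * (z:ℝ) ^ (n - k) * (n.choose k : ℝ)) := by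
    rw [hA, hB, ← Finset.sum_sub_distrib]
  rw [eq_div_iff (by positivity)]
  rw [step, ← Finset.sum_filter_add_sum_filter_not (Finset.range (n+2)) (fun k => Even k)]
  have heven : ∑ k ∈ (Finset.range (n+2)).filter (fun k => Even k),
      (s ^ k * (z:ℝ) ^ (n - k) * (n.choose k : ℝ)
        - (-s) ^ k * (z:ℝ) ^ (n - k) * (n.choose k : ℝ)) = 0 := by
    apply Finset.sum_eq_zero
    intro k hk
    have hk' : Even k := (Finset.mem_filter.mp hk).2
    rw [hk'.neg_pow]; ring
  rw [heven, zero_add, himg, Finset.sum_image (by intro a _ b _ h; simp only at h; omega)]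
  rw [redeiD]
  push_cast
  rw [Finset.sum_mul]
  apply Finset.sum_congr rfl
  intro i _
  have h1 : (-s) ^ (2*i+1) = -(s ^ (2*i+1)) := (odd_two_mul_add_one i).neg_pow s
  have h2 : n - 2*i - 1 = n - (2*i+1) := by omega
  rw [h1, h2, pow_succ, pow_mul, hs]
  ring

lemma redeiN_one (d z : ℚ) : redeiN d z 1 = z := by
  simp [redeiN]

lemma redeiN_two (d z : ℚ) : redeiN d z 2 = z ^ 2 + d := by
  simp [redeiN, Finset.sum_range_succ]

lemma redeiD_one (d z : ℚ) : redeiD d z 1 = 1 := by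
  simp [redeiD]

lemma redeiD_two (d z : ℚ) : redeiD d z 2 = 2 * z := by
  simp [redeiD, Finset.sum_range_succ]
  try ring

open Filter in
theorem redei_continued_fraction (d z : ℤ) (hd : 0 < d) (hsq : ¬ IsSquare d) (hz : 0 < z)
    (hne : d - z ^ 2 ≠ 0)
    (c : ℕ → ℚ) (hc0 : c 0 = z)
    (hcodd : ∀ k : ℕ, c (2 * k + 1) = (2 * z : ℚ) / ((d : ℚ) - (z : ℚ) ^ 2))
    (hceven : ∀ k : ℕ, c (2 * k + 2) = (2 * z : ℚ))
    (p q : ℕ → ℚ)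
    (hp0 : p 0 = c 0) (hq0 : q 0 = 1)
    (hp1 : p 1 = c 1 * p 0 + 1) (hq1 : q 1 = c 1 * q 0 + 0)
    (hprec : ∀ n : ℕ, p (n + 2) = c (n + 2) * p (n + 1) + p n)
    (hqrec : ∀ n : ℕ, q (n + 2) = c (n + 2) * q (n + 1) + q n) :
    (∀ n : ℕ, p n / q n = redeiN (d : ℚ) (z : ℚ) (n + 1) / redeiD (d : ℚ) (z : ℚ) (n + 1)) ∧
    Tendsto (fun n : ℕ => ((p n / q n : ℚ) : ℝ)) atTop (nhds (Real.sqrt d)) := by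
  set dq : ℚ := (d : ℚ) with hdq
  set zq : ℚ := (z : ℚ) with hzq
  set e : ℚ := dq - zq ^ 2 with hedef
  have he : e ≠ 0 := by
    simp only [hedef, hdq, hzq]
    exact_mod_cast hne
  -- real square root setup
  set s : ℝ := Real.sqrt ((dq : ℚ) : ℝ) with hsdef
  have hd0 : (0:ℝ) < ((dq : ℚ) : ℝ) := by rw [hdq]; exact_mod_cast hd
  have hs2 : s ^ 2 = ((dq : ℚ) : ℝ) := Real.sq_sqrt hd0.le
  have hs0 : 0 < s := Real.sqrt_pos.mpr hd0
  set x : ℝ := ((zq : ℚ) : ℝ) with hxdef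
  have hx0 : (0:ℝ) < x := by simp only [hxdef, hzq]; push_cast; exact_mod_cast hz
  -- recurrences over ℚ
  have hNrec : ∀ n, redeiN dq zq (n+2) = 2*zq*redeiN dq zq (n+1) + e * redeiN dq zq n := by
    intro n
    apply (Rat.cast_injective (α := ℝ))
    push_cast
    rw [keyN dq zq s hs2, keyN dq zq s hs2, keyN dq zq s hs2]
    have hecast : ((dq : ℚ) : ℝ) - x ^ 2 = ((e : ℚ) : ℝ) := by
      rw [hedef]; push_cast; ring
    linear_combination (((x + s)^n + (x - s)^n)/2) * hs2
      + (((x + s)^n + (x - s)^n)/2) * hecast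
  have hDrec : ∀ n, redeiD dq zq (n+2) = 2*zq*redeiD dq zq (n+1) + e * redeiD dq zq n := by
    intro n
    apply (Rat.cast_injective (α := ℝ))
    push_cast
    rw [keyD dq zq s hs2 hs0.ne', keyD dq zq s hs2 hs0.ne', keyD dq zq s hs2 hs0.ne']
    have hecast : ((dq : ℚ) : ℝ) - x ^ 2 = ((e : ℚ) : ℝ) := by
      rw [hedef]; push_cast; ring
    linear_combination (((x + s)^n - (x - s)^n)/(2*s)) * hs2
      + (((x + s)^n - (x - s)^n)/(2*s)) * hecast
  -- nonvanishing of D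
  have habs : |x - s| < x + s := by
    rw [abs_lt]; constructor <;> nlinarith
  have hpowlt : ∀ m : ℕ, |x - s| ^ (m+1) < (x + s) ^ (m+1) := by
    intro m
    exact pow_lt_pow_left₀ habs (abs_nonneg _) (Nat.succ_ne_zero m)
  have hsub : ∀ m : ℕ, (x + s) ^ (m+1) - (x - s) ^ (m+1) ≠ 0 := by
    intro m
    have h1 := hpowlt m
    have h2 : (x - s) ^ (m+1) ≤ |x - s| ^ (m+1) := by
      rw [← abs_pow]; exact le_abs_self _
    intro h
    nlinarith
  have hDne : ∀ m : ℕ, redeiD dq zq (m+1) ≠ 0 := by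
    intro m hcon
    have := keyD dq zq s hs2 hs0.ne' (m+1)
    rw [hcon] at this
    simp only [Rat.cast_zero] at this
    have := (div_eq_zero_iff.mp this.symm)
    rcases this with h | h
    · exact hsub m h
    · nlinarith
  -- main induction
  have main : ∀ n : ℕ, p n = redeiN dq zq (n+1) / e ^ ((n+1)/2)
      ∧ q n = redeiD dq zq (n+1) / e ^ ((n+1)/2) := by
    have H : ∀ n : ℕ,
        (p n = redeiN dq zq (n+1) / e ^ ((n+1)/2)
          ∧ q n = redeiD dq zq (n+1) / e ^ ((n+1)/2))
        ∧ (p (n+1) = redeiN dq zq (n+2) / e ^ ((n+2)/2)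
          ∧ q (n+1) = redeiD dq zq (n+2) / e ^ ((n+2)/2)) := by
      intro n
      induction n with
      | zero =>
        have hc1 : c 1 = 2*zq/e := by
          have := hcodd 0
          norm_num at this
          exact this
        refine ⟨⟨?_, ?_⟩, ?_, ?_⟩
        · rw [hp0, hc0, redeiN_one]; norm_num
        · rw [hq0, redeiD_one]; norm_num
        · rw [hp1, hc1, hp0, hc0, redeiN_two]
          norm_num
          try field_simp
          try ring
        · rw [hq1, hc1, hq0, redeiD_two]
          norm_num
          try field_simp
          try ring
      | succ m ih =>
        refine ⟨ih.2, ?_, ?_⟩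
        · rcases Nat.even_or_odd m with ⟨k, hk⟩ | ⟨k, hk⟩
          · subst hk
            have hc : c (k + k + 2) = 2 * zq := by
              have := hceven k; rw [two_mul] at this; exact this
            rw [hprec, hc, ih.2.1, ih.1.1,
              show (k+k+1+1)/2 = k+1 by omega, show (k+k+1)/2 = k by omega,
              show (k+k+2+1)/2 = k+1 by omega,
              show k+k+1+2 = (k+k+1)+2 from rfl, hNrec (k+k+1)]
            field_simp
            try ring
          · subst hk
            have hc : c (2*k+1+2) = 2*zq/e := by
              have := hcodd (k+1)
              rw [show 2*(k+1)+1 = 2*k+1+2 by ring] at this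
              exact this
            rw [hprec, hc, ih.2.1, ih.1.1,
              show (2*k+1+1+1)/2 = k+1 by omega, show (2*k+1+1)/2 = k+1 by omega,
              show (2*k+1+2+1)/2 = k+2 by omega,
              show 2*k+1+1+2 = (2*k+1+1)+2 from rfl, hNrec (2*k+1+1)]
            field_simp
            try ring
        · rcases Nat.even_or_odd m with ⟨k, hk⟩ | ⟨k, hk⟩
          · subst hk
            have hc : c (k + k + 2) = 2 * zq := by
              have := hceven k; rw [two_mul] at this; exact this
            rw [hqrec, hc, ih.2.2, ih.1.2,
              show (k+k+1+1)/2 = k+1 by omega, show (k+k+1)/2 = k by omega,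
              show (k+k+2+1)/2 = k+1 by omega,
              show k+k+1+2 = (k+k+1)+2 from rfl, hDrec (k+k+1)]
            field_simp
            try ring
          · subst hk
            have hc : c (2*k+1+2) = 2*zq/e := by
              have := hcodd (k+1)
              rw [show 2*(k+1)+1 = 2*k+1+2 by ring] at this
              exact this
            rw [hqrec, hc, ih.2.2, ih.1.2,
              show (2*k+1+1+1)/2 = k+1 by omega, show (2*k+1+1)/2 = k+1 by omega,
              show (2*k+1+2+1)/2 = k+2 by omega,
              show 2*k+1+1+2 = (2*k+1+1)+2 from rfl, hDrec (2*k+1+1)]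
            field_simp
            try ring
    exact fun n => (H n).1
  have part1 : ∀ n : ℕ, p n / q n = redeiN dq zq (n+1) / redeiD dq zq (n+1) := by
    intro n
    rw [(main n).1, (main n).2]
    have hen : e ^ ((n+1)/2) ≠ 0 := pow_ne_zero _ he
    field_simp
  refine ⟨part1, ?_⟩
  -- part 2
  set r : ℝ := (x - s) / (x + s) with hrdef
  have ha0 : (0:ℝ) < x + s := by linarith
  have hr : |r| < 1 := by
    rw [hrdef, abs_div, abs_of_pos ha0, div_lt_one ha0]
    exact habs
  have hrt : Tendsto (fun n : ℕ => r ^ (n+1)) atTop (nhds 0) := by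
    have := tendsto_pow_atTop_nhds_zero_of_abs_lt_one hr
    exact this.comp (tendsto_add_atTop_nat 1)
  have hlim : Tendsto (fun n : ℕ => s * (1 + r ^ (n+1)) / (1 - r ^ (n+1))) atTop
      (nhds (Real.sqrt (d:ℝ))) := by
    have : Tendsto (fun n : ℕ => s * (1 + r ^ (n+1)) / (1 - r ^ (n+1))) atTop
        (nhds (s * (1 + 0) / (1 - 0))) := by
      exact ((tendsto_const_nhds.mul (tendsto_const_nhds.add hrt)).div
        (tendsto_const_nhds.sub hrt) (by norm_num))
    have hval : s * (1 + 0) / (1 - 0) = Real.sqrt (d:ℝ) := by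
      rw [hsdef, hdq]; norm_num
    rwa [hval] at this
  apply hlim.congr
  intro n
  rw [part1 n]
  push_cast
  rw [keyN dq zq s hs2 (n+1), keyD dq zq s hs2 hs0.ne' (n+1)]
  rw [← hxdef]
  have h1 : (x + s) ^ (n+1) - (x - s) ^ (n+1) ≠ 0 := hsub n
  have h1r : 1 - r ^ (n+1) ≠ 0 := by
    rw [hrdef, div_pow]
    intro h
    rw [sub_eq_zero] at h
    have := eq_div_iff (pow_ne_zero (n+1) ha0.ne') |>.mp h
    rw [one_mul] at this
    exact h1 (by rw [← this]; ring)
  rw [hrdef, div_pow]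
  field_simp
end
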